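/- Let F be a nonnegative function on G(n,k). Then the following are equivalent: (i) F is polyconvex, i.e., there exists a gauge h : EuclideanSpace ℝ (Λ(n,k)) → ℝ with h(ξ) = F(ξ) for every ξ ∈ G(n,k); (ii) Conv_F(ξ) = F(ξ) for every ξ ∈ G(n,k). -/

import Mathlib

open scoped BigOperators Matrix Pointwise

/-- `Lam n k` : the `k`-element subsets of `Fin n` (the index set `Λ(n,k)`). -/
abbrev Lam (n k : ℕ) : Type := {s : Finset (Fin n) // s.card = k}

/-- The Plücker (minor) vector of a matrix `A : Matrix (Fin n) (Fin k) ℝ`: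
`M(A)(λ)` is the determinant of the `k × k` submatrix of `A` formed by the rows
indexed by `λ`. -/
noncomputable def pluecker (n k : ℕ) (A : Matrix (Fin n) (Fin k) ℝ) :
    EuclideanSpace ℝ (Lam n k) :=
  WithLp.toLp 2 (fun (lam : Lam n k) => (A.submatrix (lam.1.orderEmbOfFin lam.2) id).det)

/-- The Plücker model of the oriented Grassmannian `G(n,k)`. -/
def Grass (n k : ℕ) : Set (EuclideanSpace ℝ (Lam n k)) :=
  {x | ∃ A : Matrix (Fin n) (Fin k) ℝ, Aᵀ * A = 1 ∧ pluecker n k A = x}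

/-- The set of costs of representations of a point as a finite positive
combination of points of the Grassmannian. -/
def reprSet (n k : ℕ) (F : EuclideanSpace ℝ (Lam n k) → ℝ)
    (x : EuclideanSpace ℝ (Lam n k)) : Set ℝ :=
  {t | ∃ (N : ℕ) (m : Fin N → ℝ) (η : Fin N → EuclideanSpace ℝ (Lam n k)),
    1 ≤ N ∧ (∀ i, 0 < m i) ∧ (∀ i, η i ∈ Grass n k) ∧
    x = ∑ i, m i • η i ∧ t = ∑ i, m i * F (η i)}

/-- The convex positively homogeneous hull of an integrand. -/
noncomputable def ConvF (n k : ℕ) (F : EuclideanSpace ℝ (Lam n k) → ℝ)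
    (x : EuclideanSpace ℝ (Lam n k)) : ℝ :=
  sInf (reprSet n k F x)

/-- A gauge: a nonnegative, convex, positively homogeneous real function. -/
def IsGauge (n k : ℕ) (h : EuclideanSpace ℝ (Lam n k) → ℝ) : Prop :=
  (∀ x, 0 ≤ h x) ∧ ConvexOn ℝ Set.univ h ∧
    ∀ (t : ℝ) (x : EuclideanSpace ℝ (Lam n k)), 0 ≤ t → h (t • x) = t * h x

/-! ### Auxiliary lemmas -/

/-- Membership in `reprSet` from a representation indexed by an arbitrary
nonempty fintype. -/
lemma mem_reprSet_of_fintype (n k : ℕ) (F : EuclideanSpace ℝ (Lam n k) → ℝ)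
    (x : EuclideanSpace ℝ (Lam n k)) {ι : Type} [Fintype ι] [Nonempty ι]
    (m : ι → ℝ) (η : ι → EuclideanSpace ℝ (Lam n k))
    (hm : ∀ i, 0 < m i) (hη : ∀ i, η i ∈ Grass n k)
    (hx : x = ∑ i, m i • η i) :
    (∑ i, m i * F (η i)) ∈ reprSet n k F x := by
  have e := Fintype.equivFin ι
  refine ⟨Fintype.card ι, m ∘ e.symm, η ∘ e.symm, Fintype.card_pos, fun i => hm _,
    fun i => hη _, ?_, ?_⟩
  · rw [hx, ← Equiv.sum_comp e.symm (fun i => m i • η i)]; rfl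
  · rw [← Equiv.sum_comp e.symm (fun i => m i * F (η i))]; rfl

lemma neg_mem_grass (n k : ℕ) (hk : 1 ≤ k) {x : EuclideanSpace ℝ (Lam n k)}
    (hx : x ∈ Grass n k) : -x ∈ Grass n k := by
  haveI : NeZero k := ⟨by omega⟩
  obtain ⟨A, hA, hAx⟩ := hx
  set D : Matrix (Fin k) (Fin k) ℝ :=
    Matrix.diagonal (fun j => if j = 0 then (-1 : ℝ) else 1) with hD
  have hDD : D * D = 1 := by
    rw [hD, Matrix.diagonal_mul_diagonal]
    convert Matrix.diagonal_one using 2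
    ext j
    by_cases h : j = 0 <;> simp [h]
  refine ⟨A * D, ?_, ?_⟩
  · rw [Matrix.transpose_mul, hD, Matrix.diagonal_transpose, ← hD,
      Matrix.mul_assoc, ← Matrix.mul_assoc Aᵀ A D, hA, Matrix.one_mul, hDD]
  · have hdetD : D.det = -1 := by
      rw [hD, Matrix.det_diagonal]
      rw [Finset.prod_ite_eq' Finset.univ (0 : Fin k) (fun _ => (-1 : ℝ))]
      simp
    ext lam
    have hsub : (A * D).submatrix (lam.1.orderEmbOfFin lam.2) id
        = A.submatrix (lam.1.orderEmbOfFin lam.2) id * D := by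
      ext i j
      simp [Matrix.mul_apply, Matrix.submatrix_apply]
    show ((A * D).submatrix (lam.1.orderEmbOfFin lam.2) id).det = (-x) lam
    rw [hsub, Matrix.det_mul, hdetD]
    have hx2 : (-x) lam = -(pluecker n k A lam) := by rw [hAx]; rfl
    rw [hx2, mul_neg_one]
    rfl

lemma single_mem_grass (n k : ℕ) (lam : Lam n k) :
    (EuclideanSpace.single lam (1 : ℝ)) ∈ Grass n k := by
  set r := lam.1.orderEmbOfFin lam.2 with hr
  refine ⟨Matrix.of (fun i j => if i = r j then (1 : ℝ) else 0), ?_, ?_⟩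
  · ext j j'
    simp only [Matrix.mul_apply, Matrix.transpose_apply, Matrix.of_apply]
    rcases eq_or_ne j j' with h | h
    · subst h
      rw [Finset.sum_eq_single (r j)]
      · simp
      · intro b _ hb; simp [hb]
      · simp
    · rw [Finset.sum_eq_zero, Matrix.one_apply_ne h]
      intro i _
      rcases eq_or_ne i (r j) with h1 | h1
      · subst h1
        have h2 : ¬ (r j = r j') := fun hc => h (r.injective hc)
        simp [h2]
      · simp [h1]
  · ext mu
    show ((Matrix.of (fun i j => if i = r j then (1 : ℝ) else 0)).submatrix
        (mu.1.orderEmbOfFin mu.2) id).det = EuclideanSpace.single lam (1 : ℝ) mu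
    rcases eq_or_ne mu lam with h | h
    · subst h
      rw [EuclideanSpace.single_apply, if_pos rfl]
      have : (Matrix.of (fun i j => if i = r j then (1 : ℝ) else 0)).submatrix
          (mu.1.orderEmbOfFin mu.2) id = 1 := by
        ext i j
        simp only [Matrix.submatrix_apply, Matrix.of_apply, id_eq, ← hr]
        rcases eq_or_ne i j with hij | hij
        · subst hij; simp
        · have : r i ≠ r j := fun hc => hij (r.injective hc)
          simp [this, Matrix.one_apply_ne hij]
      rw [this, Matrix.det_one]
    · rw [EuclideanSpace.single_apply, if_neg h]
      -- mu ≠ lam: there is an element of mu not in lam, giving a zero row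
      have hcard : mu.1.card = lam.1.card := by rw [mu.2, lam.2]
      have hne : ¬ mu.1 ⊆ lam.1 := by
        intro hsub
        exact h (Subtype.ext (Finset.eq_of_subset_of_card_le hsub (le_of_eq hcard.symm)))
      obtain ⟨a, ha, hna⟩ := Finset.not_subset.1 hne
      obtain ⟨i, hi⟩ : ∃ i, mu.1.orderEmbOfFin mu.2 i = a := by
        have := Finset.range_orderEmbOfFin mu.1 mu.2
        have : a ∈ Set.range (mu.1.orderEmbOfFin mu.2) := by
          rw [this]; exact_mod_cast ha
        exact this
      apply Matrix.det_eq_zero_of_row_eq_zero i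
      intro j
      simp only [Matrix.submatrix_apply, Matrix.of_apply, id_eq, hi]
      rw [if_neg]
      intro hc
      apply hna
      rw [hc, hr]
      exact Finset.orderEmbOfFin_mem lam.1 lam.2 j

lemma sum_single_eq (n k : ℕ) (x : EuclideanSpace ℝ (Lam n k)) :
    ∑ lam : Lam n k, x lam • EuclideanSpace.single lam (1 : ℝ) = x := by
  ext mu
  rw [show (∑ lam : Lam n k, x lam • EuclideanSpace.single lam (1 : ℝ)) mu
      = ∑ lam : Lam n k, x lam * EuclideanSpace.single lam (1 : ℝ) mu from
    by rw [WithLp.ofLp_sum, Finset.sum_apply mu Finset.univ _]; rfl]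
  simp [EuclideanSpace.single_apply, Finset.sum_ite_eq]

lemma lam_nonempty (n k : ℕ) (hkn : k ≤ n) : Nonempty (Lam n k) := by
  obtain ⟨s, _, hs⟩ := Finset.exists_subset_card_eq
    (show k ≤ (Finset.univ : Finset (Fin n)).card by simpa using hkn)
  exact ⟨⟨s, hs⟩⟩

lemma reprSet_nonempty (n k : ℕ) (hk : 1 ≤ k) (hkn : k ≤ n)
    (F : EuclideanSpace ℝ (Lam n k) → ℝ) (x : EuclideanSpace ℝ (Lam n k)) :
    (reprSet n k F x).Nonempty := by
  haveI := lam_nonempty n k hkn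
  set m : Lam n k × Bool → ℝ := fun p =>
    if p.2 then 1 + max (x p.1) 0 else 1 + max (-(x p.1)) 0 with hm
  set η : Lam n k × Bool → EuclideanSpace ℝ (Lam n k) := fun p =>
    if p.2 then EuclideanSpace.single p.1 (1 : ℝ)
    else -(EuclideanSpace.single p.1 (1 : ℝ)) with hη
  refine ⟨∑ p : Lam n k × Bool, m p * F (η p),
    mem_reprSet_of_fintype n k F x m η ?_ ?_ ?_⟩
  · rintro ⟨lam, b⟩
    cases b <;> simp [hm] <;> positivity
  · rintro ⟨lam, b⟩
    cases b
    · simpa [hη] using neg_mem_grass n k hk (single_mem_grass n k lam)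
    · simpa [hη] using single_mem_grass n k lam
  · rw [Fintype.sum_prod_type]
    have : ∀ lam : Lam n k, ∑ b : Bool, m (lam, b) • η (lam, b)
        = x lam • EuclideanSpace.single lam (1 : ℝ) := by
      intro lam
      rw [Fintype.sum_bool]
      simp only [hm, hη, if_pos, if_neg, Bool.false_eq_true, ite_true, ite_false]
      rw [smul_neg, ← sub_eq_add_neg, ← sub_smul]
      congr 1
      have h3 := max_zero_sub_max_neg_zero_eq_self (x lam)
      linarith [h3]
    rw [Finset.sum_congr rfl (fun lam _ => this lam), sum_single_eq]

lemma reprSet_nonneg (n k : ℕ) (F : EuclideanSpace ℝ (Lam n k) → ℝ)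
    (hF : ∀ ξ ∈ Grass n k, 0 ≤ F ξ) (x : EuclideanSpace ℝ (Lam n k)) :
    ∀ t ∈ reprSet n k F x, 0 ≤ t := by
  rintro t ⟨N, m, η, _, hm, hη, _, ht⟩
  rw [ht]
  exact Finset.sum_nonneg fun i _ => mul_nonneg (hm i).le (hF _ (hη i))

lemma reprSet_bddBelow (n k : ℕ) (F : EuclideanSpace ℝ (Lam n k) → ℝ)
    (hF : ∀ ξ ∈ Grass n k, 0 ≤ F ξ) (x : EuclideanSpace ℝ (Lam n k)) :
    BddBelow (reprSet n k F x) :=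
  ⟨0, fun t ht => reprSet_nonneg n k F hF x t ht⟩

lemma convF_nonneg (n k : ℕ) (hk : 1 ≤ k) (hkn : k ≤ n)
    (F : EuclideanSpace ℝ (Lam n k) → ℝ)
    (hF : ∀ ξ ∈ Grass n k, 0 ≤ F ξ) (x : EuclideanSpace ℝ (Lam n k)) :
    0 ≤ ConvF n k F x :=
  le_csInf (reprSet_nonempty n k hk hkn F x) (reprSet_nonneg n k F hF x)

lemma convF_zero (n k : ℕ) (hk : 1 ≤ k) (hkn : k ≤ n)
    (F : EuclideanSpace ℝ (Lam n k) → ℝ)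
    (hF : ∀ ξ ∈ Grass n k, 0 ≤ F ξ) :
    ConvF n k F (0 : EuclideanSpace ℝ (Lam n k)) = 0 := by
  haveI := lam_nonempty n k hkn
  obtain ⟨lam⟩ := lam_nonempty n k hkn
  set e := EuclideanSpace.single lam (1 : ℝ)
  set c := F e + F (-e) with hc
  have hc0 : 0 ≤ c := add_nonneg (hF _ (single_mem_grass n k lam))
    (hF _ (neg_mem_grass n k hk (single_mem_grass n k lam)))
  have key : ∀ ε : ℝ, 0 < ε → ConvF n k F 0 ≤ ε * c := by
    intro ε hε
    set η₀ : Bool → EuclideanSpace ℝ (Lam n k) := fun b => bif b then e else -e with hη₀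
    have hmem : (∑ b : Bool, ε * F (η₀ b))
        ∈ reprSet n k F (0 : EuclideanSpace ℝ (Lam n k)) := by
      apply mem_reprSet_of_fintype n k F 0 (fun _ => ε) η₀ (fun _ => hε)
      · intro b
        cases b
        · simpa [hη₀] using neg_mem_grass n k hk (single_mem_grass n k lam)
        · simpa [hη₀] using single_mem_grass n k lam
      · rw [Fintype.sum_bool]
        simp [hη₀, smul_neg]
    have h2 := csInf_le (reprSet_bddBelow n k F hF 0) hmem
    calc ConvF n k F 0 ≤ ∑ b : Bool, ε * F (η₀ b) := h2
      _ = ε * c := by rw [Fintype.sum_bool, hc]; simp [hη₀]; ring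
  have hle : ConvF n k F 0 ≤ 0 := by
    refine le_of_forall_pos_le_add ?_
    intro δ hδ
    have := key (δ / (c + 1)) (by positivity)
    have h1 : δ / (c + 1) * c ≤ δ := by
      rw [div_mul_eq_mul_div, div_le_iff₀ (by linarith)]
      nlinarith
    linarith
  exact le_antisymm hle (convF_nonneg n k hk hkn F hF 0)

lemma convF_smul (n k : ℕ) (hk : 1 ≤ k) (hkn : k ≤ n)
    (F : EuclideanSpace ℝ (Lam n k) → ℝ)
    (hF : ∀ ξ ∈ Grass n k, 0 ≤ F ξ) (t : ℝ) (x : EuclideanSpace ℝ (Lam n k))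
    (ht : 0 ≤ t) : ConvF n k F (t • x) = t * ConvF n k F x := by
  rcases eq_or_lt_of_le ht with h | h
  · rw [← h, zero_smul, zero_mul, convF_zero n k hk hkn F hF]
  · have hset : reprSet n k F (t • x) = t • reprSet n k F x := by
      ext s
      constructor
      · rintro ⟨N, m, η, hN, hm, hη, hx, hs⟩
        refine ⟨t⁻¹ * s, ⟨N, fun i => t⁻¹ * m i, η, hN,
          fun i => mul_pos (inv_pos.2 h) (hm i), hη, ?_, ?_⟩, ?_⟩
        · have : x = t⁻¹ • (t • x) := by rw [smul_smul, inv_mul_cancel₀ h.ne', one_smul]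
          rw [this, hx, Finset.smul_sum]
          simp [smul_smul]
        · rw [hs, Finset.mul_sum]
          simp [mul_assoc]
        · show t • (t⁻¹ * s) = s
          rw [smul_eq_mul, ← mul_assoc, mul_inv_cancel₀ h.ne', one_mul]
      · rintro ⟨s', ⟨N, m, η, hN, hm, hη, hx, hs'⟩, rfl⟩
        refine ⟨N, fun i => t * m i, η, hN, fun i => mul_pos h (hm i), hη, ?_, ?_⟩
        · rw [hx, Finset.smul_sum]; simp [smul_smul]
        · show t • s' = _
          rw [hs', smul_eq_mul, Finset.mul_sum]
          simp [mul_assoc]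
    rw [ConvF, hset, Real.sInf_smul_of_nonneg ht, smul_eq_mul, ConvF]

lemma reprSet_add (n k : ℕ) (F : EuclideanSpace ℝ (Lam n k) → ℝ)
    {x y : EuclideanSpace ℝ (Lam n k)} {s t : ℝ}
    (hs : s ∈ reprSet n k F x) (ht : t ∈ reprSet n k F y) :
    s + t ∈ reprSet n k F (x + y) := by
  obtain ⟨N₁, m₁, η₁, hN₁, hm₁, hη₁, hx, hsum₁⟩ := hs
  obtain ⟨N₂, m₂, η₂, hN₂, hm₂, hη₂, hy, hsum₂⟩ := ht
  refine ⟨N₁ + N₂, Fin.addCases m₁ m₂, Fin.addCases η₁ η₂, by omega, ?_, ?_, ?_, ?_⟩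
  · intro i
    refine Fin.addCases (fun i => ?_) (fun i => ?_) i <;> simp [hm₁, hm₂]
  · intro i
    refine Fin.addCases (fun i => ?_) (fun i => ?_) i <;> simp [hη₁ _, hη₂ _]
  · rw [hx, hy, Fin.sum_univ_add]
    simp
  · rw [hsum₁, hsum₂, Fin.sum_univ_add]
    simp

lemma convF_add_le (n k : ℕ) (hk : 1 ≤ k) (hkn : k ≤ n)
    (F : EuclideanSpace ℝ (Lam n k) → ℝ)
    (hF : ∀ ξ ∈ Grass n k, 0 ≤ F ξ) (x y : EuclideanSpace ℝ (Lam n k)) :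
    ConvF n k F (x + y) ≤ ConvF n k F x + ConvF n k F y := by
  have key : ∀ s ∈ reprSet n k F x, ∀ t ∈ reprSet n k F y,
      ConvF n k F (x + y) ≤ s + t := fun s hs t ht =>
    csInf_le (reprSet_bddBelow n k F hF _) (reprSet_add n k F hs ht)
  have h1 : ∀ s ∈ reprSet n k F x, ConvF n k F (x + y) - s ≤ ConvF n k F y := by
    intro s hs
    show _ ≤ sInf (reprSet n k F y)
    apply le_csInf (reprSet_nonempty n k hk hkn F y)
    intro t ht
    linarith [key s hs t ht]
  have h2 : ConvF n k F (x + y) - ConvF n k F y ≤ ConvF n k F x := by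
    show _ ≤ sInf (reprSet n k F x)
    apply le_csInf (reprSet_nonempty n k hk hkn F x)
    intro s hs
    linarith [h1 s hs]
  linarith

lemma convF_isGauge (n k : ℕ) (hk : 1 ≤ k) (hkn : k ≤ n)
    (F : EuclideanSpace ℝ (Lam n k) → ℝ)
    (hF : ∀ ξ ∈ Grass n k, 0 ≤ F ξ) : IsGauge n k (ConvF n k F) := by
  refine ⟨convF_nonneg n k hk hkn F hF, ⟨convex_univ, ?_⟩,
    fun t x ht => convF_smul n k hk hkn F hF t x ht⟩
  intro x _ y _ a b ha hb hab
  calc ConvF n k F (a • x + b • y)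
      ≤ ConvF n k F (a • x) + ConvF n k F (b • y) :=
        convF_add_le n k hk hkn F hF _ _
    _ = a * ConvF n k F x + b * ConvF n k F y := by
        rw [convF_smul n k hk hkn F hF a x ha, convF_smul n k hk hkn F hF b y hb]
    _ = a • ConvF n k F x + b • ConvF n k F y := rfl

/-- a nonnegative integrand is polyconvex (extends to a gauge) iff it
coincides with its convex positively homogeneous hull on G(n,k). -/
theorem polyconvex_iff_convF_eq (n k : ℕ) (hk : 1 ≤ k) (hkn : k ≤ n)
    (F : EuclideanSpace ℝ (Lam n k) → ℝ)
    (hF : ∀ ξ ∈ Grass n k, 0 ≤ F ξ) :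
    (∃ h : EuclideanSpace ℝ (Lam n k) → ℝ, IsGauge n k h ∧
      ∀ ξ ∈ Grass n k, h ξ = F ξ) ↔
    (∀ ξ ∈ Grass n k, ConvF n k F ξ = F ξ) := by
  constructor
  · rintro ⟨h, ⟨h0, hconv, hhom⟩, hhF⟩ ξ hξ
    refine le_antisymm ?_ ?_
    · -- ConvF ξ ≤ F ξ : the trivial representation
      apply csInf_le (reprSet_bddBelow n k F hF ξ)
      refine ⟨1, fun _ => 1, fun _ => ξ, le_refl 1, fun _ => one_pos,
        fun _ => hξ, ?_, ?_⟩ <;> simp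
    · -- F ξ ≤ ConvF ξ via sublinearity of h
      apply le_csInf (reprSet_nonempty n k hk hkn F ξ)
      rintro t ⟨N, m, η, hN, hm, hη, hx, ht⟩
      haveI : NeZero N := ⟨by omega⟩
      set s := ∑ i, m i with hsdef
      have hs : 0 < s := Finset.sum_pos (fun i _ => hm i) ⟨0, Finset.mem_univ _⟩
      have hw : ∑ i, m i / s = 1 := by
        rw [← Finset.sum_div, div_self hs.ne']
      have key : h ξ ≤ ∑ i, m i * h (η i) := by
        have hj := hconv.map_sum_le (t := Finset.univ) (w := fun i => m i / s)
          (p := η) (fun i _ => div_nonneg (hm i).le hs.le) hw (fun i _ => Set.mem_univ _)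
        have hξs : ξ = s • ∑ i, (m i / s) • η i := by
          rw [Finset.smul_sum, hx]
          congr 1
          funext i
          rw [smul_smul, mul_div_cancel₀ _ hs.ne']
        calc h ξ = s * h (∑ i, (m i / s) • η i) := by
              rw [hξs, hhom s _ hs.le]
          _ ≤ s * ∑ i, (m i / s) * h (η i) := by
              apply mul_le_mul_of_nonneg_left _ hs.le
              simpa using hj
          _ = ∑ i, m i * h (η i) := by
              rw [Finset.mul_sum]
              congr 1
              funext i
              rw [← mul_assoc, mul_div_cancel₀ _ hs.ne']
      rw [ht, ← hhF ξ hξ]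
      calc h ξ ≤ ∑ i, m i * h (η i) := key
        _ = ∑ i, m i * F (η i) :=
          Finset.sum_congr rfl (fun i _ => by rw [hhF _ (hη i)])
  · intro hcf
    exact ⟨ConvF n k F, convF_isGauge n k hk hkn F hF, hcf⟩
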